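/- First Isomorphism Theorem (similarity-based, isomorphism case): if H : A → B is an isomorphism of L-algebras, then a : b ≈_{(A,B)} Ha : Hb for all a, b ∈ A. -/
import Mathlib


/-- Terms over a language `L` of function symbols with arities `ar`,
with variables indexed by `ℕ`. -/
inductive Term (L : Type) (ar : L → ℕ) : Type
  | var : ℕ → Term L ar
  | app : (f : L) → (Fin (ar f) → Term L ar) → Term L ar

/-- An `L`-algebra. -/
structure Alg (L : Type) (ar : L → ℕ) where
  carrier : Type
  op : (f : L) → (Fin (ar f) → carrier) → carrier

/-- Evaluation of a term in an algebra under an assignment of the variables. -/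
def Term.eval {L : Type} {ar : L → ℕ} (A : Alg L ar) (ρ : ℕ → A.carrier) :
    Term L ar → A.carrier
  | .var n => ρ n
  | .app f ts => A.op f fun i => (ts i).eval A ρ

/-- Homomorphisms of `L`-algebras. -/
def IsHom {L : Type} {ar : L → ℕ} (A B : Alg L ar) (H : A.carrier → B.carrier) : Prop :=
  ∀ (f : L) (as : Fin (ar f) → A.carrier), H (A.op f as) = B.op f (H ∘ as)

/-- Justifications of an arrow `a → b`: pairs of terms `(s, t)` realized under
a common assignment. -/
def Jus {L : Type} {ar : L → ℕ} (A : Alg L ar) (p : A.carrier × A.carrier) :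
    Set (Term L ar × Term L ar) :=
  {st | ∃ ρ : ℕ → A.carrier, st.1.eval A ρ = p.1 ∧ st.2.eval A ρ = p.2}

/-- Trivial justifications in `(A, B)`: those justifying every arrow in `A` and in `B`. -/
def TrivJus {L : Type} {ar : L → ℕ} (A B : Alg L ar) : Set (Term L ar × Term L ar) :=
  {st | (∀ p : A.carrier × A.carrier, st ∈ Jus A p) ∧
        (∀ q : B.carrier × B.carrier, st ∈ Jus B q)}

/-- The arrow relation `(a→b) ≲_{(A,B)} (c→d)`: either all justifications on either side
are trivial, or the common justifications include a non-trivial one and form a maximal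
set among common justification sets with arrows of `B`. -/
def ArrLe {L : Type} {ar : L → ℕ} (A B : Alg L ar)
    (p : A.carrier × A.carrier) (q : B.carrier × B.carrier) : Prop :=
  (Jus A p ∪ Jus B q ⊆ TrivJus A B) ∨
  (TrivJus A B ⊂ Jus A p ∩ Jus B q ∧
    ∀ q' : B.carrier × B.carrier,
      TrivJus A B ⊂ Jus A p ∩ Jus B q → Jus A p ∩ Jus B q ⊆ Jus A p ∩ Jus B q' →
        TrivJus A B ⊂ Jus A p ∩ Jus B q' ∧ Jus A p ∩ Jus B q' ⊆ Jus A p ∩ Jus B q)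

/-- Similarity-based analogical proportion `a : b ≈_{(A,B)} c : d`. -/
def AP {L : Type} {ar : L → ℕ} (A B : Alg L ar) (a b : A.carrier) (c d : B.carrier) : Prop :=
  ArrLe A B (a, b) (c, d) ∧ ArrLe A B (b, a) (d, c) ∧
  ArrLe B A (c, d) (a, b) ∧ ArrLe B A (d, c) (b, a)

/-- Generalizations of an element. -/
def Gen {L : Type} {ar : L → ℕ} (A : Alg L ar) (a : A.carrier) : Set (Term L ar) :=
  {s | ∃ ρ : ℕ → A.carrier, s.eval A ρ = a}

/-- Trivial generalizations in `(A, B)`. -/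
def TrivGen {L : Type} {ar : L → ℕ} (A B : Alg L ar) : Set (Term L ar) :=
  {s | (∀ a : A.carrier, s ∈ Gen A a) ∧ (∀ b : B.carrier, s ∈ Gen B b)}

/-- `a ≲_{(A,B)} b` for elements. -/
def SimLe {L : Type} {ar : L → ℕ} (A B : Alg L ar) (a : A.carrier) (b : B.carrier) : Prop :=
  (Gen A a ∪ Gen B b ⊆ TrivGen A B) ∨
  (TrivGen A B ⊂ Gen A a ∩ Gen B b ∧
    ∀ b' : B.carrier,
      TrivGen A B ⊂ Gen A a ∩ Gen B b → Gen A a ∩ Gen B b ⊆ Gen A a ∩ Gen B b' →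
        TrivGen A B ⊂ Gen A a ∩ Gen B b' ∧ Gen A a ∩ Gen B b' ⊆ Gen A a ∩ Gen B b)

/-- The similarity relation `a ≈_{(A,B)} b`. -/
def Sim {L : Type} {ar : L → ℕ} (A B : Alg L ar) (a : A.carrier) (b : B.carrier) : Prop :=
  SimLe A B a b ∧ SimLe B A b a

theorem eval_hom {L : Type} {ar : L → ℕ} (A B : Alg L ar) (H : A.carrier → B.carrier)
    (hH : IsHom A B H) : ∀ (t : Term L ar) (ρ : ℕ → A.carrier),
    t.eval B (H ∘ ρ) = H (t.eval A ρ)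
  | .var n, ρ => rfl
  | .app f ts, ρ => by
    show B.op f (fun i => (ts i).eval B (H ∘ ρ)) = H (A.op f fun i => (ts i).eval A ρ)
    rw [hH]
    congr 1
    funext i
    exact eval_hom A B H hH (ts i) ρ

theorem jus_eq {L : Type} {ar : L → ℕ} (A B : Alg L ar)
    (H : A.carrier → B.carrier) (G : B.carrier → A.carrier)
    (hH : IsHom A B H) (hG : IsHom B A G)
    (hGH : ∀ x, G (H x) = x) (a b : A.carrier) :
    Jus B (H a, H b) = Jus A (a, b) := by
  ext st
  constructor
  · rintro ⟨ρ, h1, h2⟩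
    refine ⟨G ∘ ρ, ?_, ?_⟩
    · rw [eval_hom B A G hG, h1, hGH]
    · rw [eval_hom B A G hG, h2, hGH]
  · rintro ⟨ρ, h1, h2⟩
    refine ⟨H ∘ ρ, ?_, ?_⟩
    · rw [eval_hom A B H hH, h1]
    · rw [eval_hom A B H hH, h2]

theorem arrLe_of_eq {L : Type} {ar : L → ℕ} (A B : Alg L ar)
    (p : A.carrier × A.carrier) (q : B.carrier × B.carrier)
    (h : Jus B q = Jus A p) : ArrLe A B p q := by
  have hinter : Jus A p ∩ Jus B q = Jus A p := by rw [h, Set.inter_self]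
  by_cases hc : Jus A p ⊆ TrivJus A B
  · left
    rw [h, Set.union_self]
    exact hc
  · right
    have hsub : TrivJus A B ⊆ Jus A p := fun st hst => hst.1 p
    have hss : TrivJus A B ⊂ Jus A p := Set.ssubset_def.mpr ⟨hsub, fun h' => hc h'⟩
    constructor
    · rw [hinter]; exact hss
    · intro q' _ hsub2
      rw [hinter] at hsub2 ⊢
      have heq : Jus A p ∩ Jus B q' = Jus A p :=
        Set.Subset.antisymm Set.inter_subset_left hsub2
      rw [heq]
      exact ⟨hss, le_refl _⟩

/-- First Isomorphism Theorem (similarity-based), isomorphism case: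
`a : b ≈_{(A,B)} Ha : Hb` for all `a, b ∈ A`. -/
theorem first_isomorphism_theorem_iso {L : Type} {ar : L → ℕ} (A B : Alg L ar)
    (H : A.carrier → B.carrier) (G : B.carrier → A.carrier)
    (hH : IsHom A B H) (hG : IsHom B A G)
    (hGH : ∀ x, G (H x) = x) (hHG : ∀ y, H (G y) = y) :
    ∀ a b : A.carrier, AP A B a b (H a) (H b) := by
  intro a b
  have h1 := jus_eq A B H G hH hG hGH a b
  have h2 := jus_eq A B H G hH hG hGH b a
  exact ⟨arrLe_of_eq A B (a, b) (H a, H b) h1,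
    arrLe_of_eq A B (b, a) (H b, H a) h2,
    arrLe_of_eq B A (H a, H b) (a, b) h1.symm,
    arrLe_of_eq B A (H b, H a) (b, a) h2.symm⟩
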